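/- The function c({pᵢ}), defined on probability vectors as the unique c ≥ 0 satisfying Σᵢ pᵢ/(c + pᵢ) = 1, is Schur-concave: if {p'ᵢ} is obtained from {pᵢ} by a doubly stochastic matrix, then c({p'ᵢ}) ≥ c({pᵢ}). -/

import Mathlib

open Matrix BigOperators

lemma concave_ratio (c : ℝ) (hc : 0 < c) :
    ConcaveOn ℝ (Set.Ici 0) (fun x : ℝ => x / (c + x)) := by
  constructor
  · exact convex_Ici 0
  · intro x hx y hy a b ha hb hab
    simp only [smul_eq_mul]
    have hx0 : (0:ℝ) ≤ x := hx
    have hy0 : (0:ℝ) ≤ y := hy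
    have hcx : 0 < c + x := by linarith
    have hcy : 0 < c + y := by linarith
    have hcz : 0 < c + (a * x + b * y) := by nlinarith
    rw [← mul_div_assoc, ← mul_div_assoc, div_add_div _ _ hcx.ne' hcy.ne',
      div_le_div_iff₀ (by positivity) hcz]
    have hid : (a * x + b * y) * ((c + x) * (c + y)) -
        (a * x * (c + y) + (c + x) * (b * y)) * (c + (a * x + b * y)) =
        c * a * b * (x - y) ^ 2 := by
      have hb' : b = 1 - a := by linarith
      rw [hb']; ring
    have hnn : 0 ≤ c * a * b * (x - y) ^ 2 :=
      mul_nonneg (mul_nonneg (mul_nonneg hc.le ha) hb) (sq_nonneg (x - y))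
    linarith

/-- the function `c(p)`, the unique nonnegative solution of
`Σᵢ pᵢ/(c + pᵢ) = 1`, is Schur-concave: if `p' = B p` for a doubly stochastic `B`,
then `c(p') ≥ c(p)`. -/
theorem schur_concave_c {n : ℕ} (p : Fin n → ℝ)
    (hp0 : ∀ i, 0 ≤ p i) (hp1 : ∑ i, p i = 1)
    (h2 : ∃ i j : Fin n, i ≠ j ∧ 0 < p i ∧ 0 < p j)
    (B : Matrix (Fin n) (Fin n) ℝ) (hB0 : ∀ i j, 0 ≤ B i j)
    (hBrow : ∀ i, ∑ j, B i j = 1) (hBcol : ∀ j, ∑ i, B i j = 1)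
    (c c' : ℝ) (hc0 : 0 ≤ c) (hc'0 : 0 ≤ c')
    (hc : ∑ i, p i / (c + p i) = 1)
    (hc' : ∑ i, (B.mulVec p) i / (c' + (B.mulVec p) i) = 1) :
    c ≤ c' := by
  -- First, c > 0
  have hcpos : 0 < c := by
    rcases lt_or_eq_of_le hc0 with h | h
    · exact h
    · exfalso
      obtain ⟨i, j, hij, hpi, hpj⟩ := h2
      have hterm : ∀ k, 0 ≤ p k / (c + p k) := fun k =>
        div_nonneg (hp0 k) (by linarith [hp0 k])
      have hsub : ({i, j} : Finset (Fin n)) ⊆ Finset.univ := Finset.subset_univ _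
      have h2le : ∑ k ∈ ({i, j} : Finset (Fin n)), p k / (c + p k) ≤
          ∑ k, p k / (c + p k) :=
        Finset.sum_le_sum_of_subset_of_nonneg hsub (fun k _ _ => hterm k)
      rw [Finset.sum_pair hij, hc] at h2le
      rw [← h] at h2le
      rw [zero_add, zero_add, div_self hpi.ne', div_self hpj.ne'] at h2le
      linarith
  set q : Fin n → ℝ := B.mulVec p with hq
  have hq0 : ∀ i, 0 ≤ q i := by
    intro i
    simp only [hq, Matrix.mulVec, dotProduct]
    exact Finset.sum_nonneg fun j _ => mul_nonneg (hB0 i j) (hp0 j)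
  -- Jensen: q i/(c+q i) ≥ ∑ j, B i j * (p j/(c+p j))
  have hjensen : ∀ i, ∑ j, B i j * (p j / (c + p j)) ≤ q i / (c + q i) := by
    intro i
    have := (concave_ratio c hcpos).le_map_sum
      (t := Finset.univ) (w := fun j => B i j) (p := fun j => p j)
      (fun j _ => hB0 i j) (hBrow i) (fun j _ => hp0 j)
    simpa [hq, Matrix.mulVec, dotProduct, smul_eq_mul] using this
  have hkey : (1:ℝ) ≤ ∑ i, q i / (c + q i) := by
    calc (1:ℝ) = ∑ j, p j / (c + p j) := hc.symm
    _ = ∑ j, (∑ i, B i j) * (p j / (c + p j)) := by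
        refine Finset.sum_congr rfl fun j _ => ?_
        rw [hBcol j, one_mul]
    _ = ∑ j, ∑ i, B i j * (p j / (c + p j)) := by
        refine Finset.sum_congr rfl fun j _ => ?_
        rw [Finset.sum_mul]
    _ = ∑ i, ∑ j, B i j * (p j / (c + p j)) := Finset.sum_comm
    _ ≤ ∑ i, q i / (c + q i) := Finset.sum_le_sum fun i _ => hjensen i
  -- Now suppose c' < c and derive a contradiction by strict monotonicity
  by_contra hlt
  push_neg at hlt
  have hqsum : ∑ i, q i = 1 := by
    simp only [hq, Matrix.mulVec, dotProduct]
    rw [Finset.sum_comm]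
    calc ∑ j, ∑ i, B i j * p j = ∑ j, (∑ i, B i j) * p j := by
          refine Finset.sum_congr rfl fun j _ => ?_
          rw [Finset.sum_mul]
    _ = ∑ j, p j := by
          refine Finset.sum_congr rfl fun j _ => ?_
          rw [hBcol j, one_mul]
    _ = 1 := hp1
  have hqex : ∃ i, 0 < q i := by
    by_contra hq'
    push_neg at hq'
    have : ∑ i, q i = 0 := le_antisymm (Finset.sum_nonpos fun i _ => hq' i)
      (Finset.sum_nonneg fun i _ => hq0 i)
    rw [hqsum] at this; norm_num at this
  obtain ⟨i₀, hi₀⟩ := hqex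
  have hstrict : ∑ i, q i / (c + q i) < ∑ i, q i / (c' + q i) := by
    apply Finset.sum_lt_sum
    · intro i _
      rcases lt_or_eq_of_le (hq0 i) with h | h
      · exact div_le_div_of_nonneg_left (hq0 i) (by linarith) (by linarith)
      · rw [← h]; simp
    · exact ⟨i₀, Finset.mem_univ i₀,
        div_lt_div_of_pos_left hi₀ (by linarith) (by linarith)⟩
  rw [hc'] at hstrict
  linarith
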